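/- Let V ⊂ P^n (n > 1) be a hypersurface over F_p defined by a polynomial of the form f·x_0 + g, where f and g are homogeneous polynomials in x_1,...,x_n with deg g = deg f + 1. Let k be the number of F_p-points of the hypersurface f = 0 in P^{n-1}. Then the number of F_p-points of V is congruent to 2 - k modulo p. -/

import Mathlib

open MvPolynomial Finset

theorem evalSmulPowAux {σ : Type*} [Fintype σ] {R : Type*} [CommRing R] {d : ℕ}
    {h : MvPolynomial σ R}
    (hh : h.IsHomogeneous d) (c : R) (x : σ → R) : eval (c • x) h = c ^ d * eval x h := by
  rw [eval_eq', eval_eq', Finset.mul_sum]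
  refine Finset.sum_congr rfl fun s hs => ?_
  have hdeg : ∑ i, s i = d := by
    have h1 := hh (mem_support_iff.mp hs)
    rw [Pi.one_def, ← Finsupp.degree_eq_weight_one] at h1
    rw [← h1, Finsupp.degree]
    exact (Finset.sum_subset (Finset.subset_univ _)
      (fun i _ hi => Finsupp.notMem_support_iff.mp hi)).symm
  rw [← hdeg, mul_comm (c ^ _), mul_assoc]
  congr 1
  rw [← Finset.prod_pow_eq_pow_sum, ← Finset.prod_mul_distrib]
  exact Finset.prod_congr rfl fun i _ => by rw [Pi.smul_apply, smul_eq_mul, mul_pow, mul_comm]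

theorem cardProjAux (p : ℕ) [Fact p.Prime] {m d : ℕ} {h : MvPolynomial (Fin m) (ZMod p)}
    (hh : h.IsHomogeneous d) :
    Nat.card {x : Fin m → ZMod p // x ≠ 0 ∧ eval x h = 0} =
      (p - 1) * Nat.card {P : Projectivization (ZMod p) (Fin m → ZMod p) //
        eval P.rep h = 0} := by
  have key : ∀ (c : (ZMod p)ˣ) (v : Fin m → ZMod p),
      eval (c • v) h = (c : ZMod p) ^ d * eval v h := by
    intro c v
    rw [Units.smul_def, evalSmulPowAux hh]
  let F : {P : Projectivization (ZMod p) (Fin m → ZMod p) // eval P.rep h = 0} × (ZMod p)ˣ →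
      {x : Fin m → ZMod p // x ≠ 0 ∧ eval x h = 0} := fun q =>
    ⟨q.2 • q.1.1.rep, by
      constructor
      · intro h0
        exact q.1.1.rep_nonzero (by simpa using congrArg (fun w => q.2⁻¹ • w) h0)
      · rw [key, q.1.2, mul_zero]⟩
  have hbij : Function.Bijective F := by
    constructor
    · rintro ⟨⟨P, hP⟩, c⟩ ⟨⟨Q, hQ⟩, c'⟩ hEq
      have hEq' : c • P.rep = c' • Q.rep := congrArg Subtype.val hEq
      have hPQ : P = Q := by
        conv_lhs => rw [← P.mk_rep]
        conv_rhs => rw [← Q.mk_rep]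
        rw [Projectivization.mk_eq_mk_iff]
        exact ⟨c⁻¹ * c', by rw [mul_smul, ← hEq', inv_smul_smul]⟩
      subst hPQ
      obtain ⟨i, hi⟩ := Function.ne_iff.mp P.rep_nonzero
      have : (c : ZMod p) * P.rep i = (c' : ZMod p) * P.rep i := congrFun hEq' i
      have hcc : c = c' := Units.ext (mul_right_cancel₀ (by simpa using hi) this)
      simp [hcc]
    · rintro ⟨x, hx, hx0⟩
      obtain ⟨a, ha⟩ := Projectivization.exists_smul_eq_mk_rep (ZMod p) x hx
      refine ⟨⟨⟨Projectivization.mk (ZMod p) x hx, ?_⟩, a⁻¹⟩, ?_⟩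
      · rw [← ha, key, hx0, mul_zero]
      · simp only [F]
        apply Subtype.ext
        simp only [← ha, inv_smul_smul]
  rw [← Nat.card_congr (Equiv.ofBijective F hbij), Nat.card_prod, mul_comm,
    Nat.card_eq_fintype_card, ZMod.card_units]

theorem cardZerosAux (p : ℕ) [Fact p.Prime] {m d : ℕ} (hd : 0 < d)
    {h : MvPolynomial (Fin m) (ZMod p)} (hh : h.IsHomogeneous d) :
    Nat.card {x : Fin m → ZMod p // eval x h = 0} =
      Nat.card {x : Fin m → ZMod p // x ≠ 0 ∧ eval x h = 0} + 1 := by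
  classical
  have h0 : eval (0 : Fin m → ZMod p) h = 0 := by
    have := evalSmulPowAux hh (0 : ZMod p) (0 : Fin m → ZMod p)
    simpa [zero_pow hd.ne'] using this
  rw [Nat.card_eq_fintype_card, Nat.card_eq_fintype_card,
    Fintype.card_subtype, Fintype.card_subtype]
  have : (univ.filter fun x : Fin m → ZMod p => eval x h = 0) =
      insert 0 (univ.filter fun x => x ≠ 0 ∧ eval x h = 0) := by
    ext x
    by_cases hx : x = 0 <;> simp [hx, show constantCoeff h = 0 by simpa using h0]
  rw [this, Finset.card_insert_of_notMem (by simp)]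

theorem lineSumAux (p : ℕ) [Fact p.Prime] (a b : ZMod p) :
    ∑ t : ZMod p, (if a * t + b = 0 then (1 : ZMod p) else 0) =
      if a = 0 then 0 else 1 := by
  by_cases ha : a = 0
  · subst ha
    simp only [zero_mul, zero_add, if_pos rfl]
    by_cases hb : b = 0
    · simp [hb, Finset.card_univ, ZMod.card, ZMod.natCast_self]
    · simp [hb]
  · rw [if_neg ha]
    have : ∀ t : ZMod p, (a * t + b = 0) ↔ (t = -b / a) := by
      intro t
      rw [eq_div_iff ha]
      constructor
      · intro h; linear_combination h
      · intro h; linear_combination h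
    simp only [this]
    rw [Finset.sum_ite_eq' univ (-b / a) fun _ => (1 : ZMod p)]
    simp

theorem affineCountAux (p n : ℕ) [Fact p.Prime] (hn : 0 < n)
    (f g : MvPolynomial (Fin n) (ZMod p)) :
    (Nat.card {x : Fin (n + 1) → ZMod p //
        eval x ((rename Fin.succ f) * X 0 + rename Fin.succ g) = 0} : ZMod p) =
      - (Nat.card {x : Fin n → ZMod p // eval x f = 0} : ZMod p) := by
  classical
  set F := (rename Fin.succ f) * X 0 + rename Fin.succ g with hF
  have heval : ∀ (t : ZMod p) (x : Fin n → ZMod p),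
      eval (Fin.cons t x) F = eval x f * t + eval x g := by
    intro t x
    simp only [hF, eval_add, eval_mul, eval_X, eval_rename]
    have h1 : (Fin.cons t x : Fin (n+1) → ZMod p) ∘ Fin.succ = x := by
      funext i; simp [Fin.cons_succ]
    rw [h1, Fin.cons_zero]
  let e : (Fin (n + 1) → ZMod p) ≃ (Fin n → ZMod p) × ZMod p :=
    { toFun := fun x => (x ∘ Fin.succ, x 0)
      invFun := fun q => Fin.cons q.2 q.1
      left_inv := fun x => by
        funext i
        refine Fin.cases ?_ ?_ i
        · simp
        · intro j; simp [Fin.cons_succ]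
      right_inv := fun q => by
        ext i <;> simp [Fin.cons_succ] }
  have hcongr : Nat.card {x : Fin (n + 1) → ZMod p // eval x F = 0} =
      Nat.card {q : (Fin n → ZMod p) × ZMod p // eval q.1 f * q.2 + eval q.1 g = 0} := by
    refine Nat.card_congr (e.subtypeEquiv fun x => ?_)
    show eval x F = 0 ↔ eval (x ∘ Fin.succ) f * x 0 + eval (x ∘ Fin.succ) g = 0
    rw [← heval (x 0) (x ∘ Fin.succ)]
    have hx : Fin.cons (x 0) (x ∘ Fin.succ) = x := by
      funext i
      refine Fin.cases rfl (fun j => ?_) i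
      simp [Fin.cons_succ]
    rw [hx]
  rw [hcongr]
  rw [Nat.card_eq_fintype_card, Fintype.card_subtype, Finset.card_filter]
  push_cast
  rw [Fintype.sum_prod_type]
  simp only [apply_ite (Nat.cast : ℕ → ZMod p), Nat.cast_one, Nat.cast_zero]
  have : ∀ x : Fin n → ZMod p,
      (∑ t : ZMod p, if eval x f * t + eval x g = 0 then (1 : ZMod p) else 0) =
        1 - (if eval x f = 0 then (1:ZMod p) else 0) := by
    intro x
    rw [lineSumAux]
    split <;> ring
  rw [Finset.sum_congr rfl fun x _ => this x, Finset.sum_sub_distrib, Finset.sum_const,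
    Finset.card_univ]
  have hcard : (Fintype.card (Fin n → ZMod p) : ZMod p) = 0 := by
    rw [Fintype.card_fun]
    push_cast
    rw [ZMod.card, Fintype.card_fin, ZMod.natCast_self, zero_pow hn.ne']
  rw [nsmul_eq_mul, mul_one, hcard, zero_sub, neg_inj,
    Nat.card_eq_fintype_card, Fintype.card_subtype, Finset.card_filter]
  push_cast
  simp only [apply_ite (Nat.cast : ℕ → ZMod p), Nat.cast_one, Nat.cast_zero]

/-- linear reduction: for a hypersurface `V ⊂ ℙⁿ` (`n > 1`) over `𝔽_p`
defined by `f·x₀ + g` with `f, g` homogeneous in `x₁,…,xₙ` of degrees `d, d+1` (`d > 0`),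
the number of `𝔽_p`-points of `V` is congruent to `2 - k` mod `p`, where `k` is the number
of `𝔽_p`-points of the hypersurface `f = 0` in `ℙ^{n-1}`. -/
theorem stmt4 (p n : ℕ) [Fact p.Prime] (hn : 1 < n) (d : ℕ) (hd : 0 < d)
    (f g : MvPolynomial (Fin n) (ZMod p))
    (hf : f.IsHomogeneous d) (hg : g.IsHomogeneous (d + 1)) :
    (Nat.card {P : Projectivization (ZMod p) (Fin (n + 1) → ZMod p) //
        eval P.rep ((rename Fin.succ f) * X 0 + rename Fin.succ g) = 0} : ZMod p) =
      2 - (Nat.card {Q : Projectivization (ZMod p) (Fin n → ZMod p) //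
        eval Q.rep f = 0} : ZMod p) := by
  have hFhom : ((rename Fin.succ f) * X 0 + rename (Fin.succ (n := n)) g).IsHomogeneous (d + 1) :=
    (hf.rename_isHomogeneous.mul (isHomogeneous_X _ 0)).add hg.rename_isHomogeneous
  set a := Nat.card {P : Projectivization (ZMod p) (Fin (n + 1) → ZMod p) //
      eval P.rep ((rename Fin.succ f) * X 0 + rename Fin.succ g) = 0} with ha
  set b := Nat.card {Q : Projectivization (ZMod p) (Fin n → ZMod p) // eval Q.rep f = 0} with hb
  have h1 : Nat.card {x : Fin (n + 1) → ZMod p //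
      eval x ((rename Fin.succ f) * X 0 + rename Fin.succ g) = 0} = (p - 1) * a + 1 := by
    rw [cardZerosAux p (Nat.succ_pos d) hFhom, cardProjAux p hFhom]
  have h2 : Nat.card {x : Fin n → ZMod p // eval x f = 0} = (p - 1) * b + 1 := by
    rw [cardZerosAux p hd hf, cardProjAux p hf]
  have h3 := affineCountAux p n (by omega) f g
  rw [h1, h2] at h3
  have hp1 : 1 ≤ p := (Fact.out : p.Prime).one_lt.le
  have hpm1 : ((p - 1 : ℕ) : ZMod p) = -1 := by
    rw [Nat.cast_sub hp1, ZMod.natCast_self, Nat.cast_one, zero_sub]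
  push_cast at h3
  rw [hpm1] at h3
  linear_combination -h3
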